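/- For |q| < 1, the 'circle' triple sum ∑_{n₁,n₂,n₃≥0} q^{n₁+n₂+n₃+n₁n₂+n₂n₃+n₃n₁} / ((q;q)_{n₁}(q;q)_{n₂}(q;q)_{n₃}) equals 1/(q;q)_∞ · ∑_{n≥0} qⁿ/(q^{n+1};q)_{n+1}. -/

import Mathlib

open Finset Filter Topology

/-- The finite q-Pochhammer symbol `(q;q)_n`. -/
noncomputable def qPoch (q : ℂ) (n : ℕ) : ℂ := ∏ i ∈ Finset.range n, (1 - q ^ (i + 1))

/-- The infinite q-Pochhammer symbol `(q;q)_∞`. -/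
noncomputable def qPochInf (q : ℂ) : ℂ := ∏' i : ℕ, (1 - q ^ (i + 1))

/-- The infinite q-Pochhammer symbol `(a;q)_∞ = ∏_{i≥0} (1 - a q^i)`. -/
noncomputable def pochInf (a q : ℂ) : ℂ := ∏' i : ℕ, (1 - a * q ^ i)

-- basic facts
lemma qPoch_zero (q : ℂ) : qPoch q 0 = 1 := by simp [qPoch]

lemma qPoch_succ (q : ℂ) (n : ℕ) : qPoch q (n+1) = qPoch q n * (1 - q ^ (n+1)) := by
  simp [qPoch, Finset.prod_range_succ]

lemma one_sub_q_pow_ne (q : ℂ) (hq : ‖q‖ < 1) (k : ℕ) : 1 - q ^ (k+1) ≠ 0 := by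
  intro h
  have h1 : q ^ (k+1) = 1 := by linear_combination -h
  have : ‖q ^ (k+1)‖ < 1 := by
    rw [norm_pow]
    exact pow_lt_one₀ (norm_nonneg q) hq (show k+1 ≠ 0 by omega)
  rw [h1] at this; simp at this

lemma qPoch_ne (q : ℂ) (hq : ‖q‖ < 1) (n : ℕ) : qPoch q n ≠ 0 := by
  rw [qPoch, Finset.prod_ne_zero_iff]
  exact fun i _ => one_sub_q_pow_ne q hq i

lemma qPoch_add (q : ℂ) (k n : ℕ) :
    qPoch q (k + n) = qPoch q k * ∏ j ∈ Finset.range n, (1 - q ^ (k+1) * q ^ j) := by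
  rw [qPoch, Finset.prod_range_add]
  congr 1
  apply Finset.prod_congr rfl
  intro j _
  rw [← pow_add]
  congr 2
  omega

-- Weierstrass product inequality
lemma weier (a : ℕ → ℝ) (ha : ∀ i, 0 ≤ a i) (ha' : ∀ i, a i ≤ 1) (n : ℕ) :
    1 - ∑ i ∈ Finset.range n, a i ≤ ∏ i ∈ Finset.range n, (1 - a i) := by
  induction n with
  | zero => simp
  | succ n ih =>
    rw [Finset.prod_range_succ, Finset.sum_range_succ]
    have h1 : (0:ℝ) ≤ ∏ i ∈ Finset.range n, (1 - a i) :=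
      Finset.prod_nonneg (fun i _ => by linarith [ha' i])
    have h2 : (0:ℝ) ≤ ∑ i ∈ Finset.range n, a i :=
      Finset.sum_nonneg (fun i _ => ha i)
    nlinarith [ha n, ha' n]

lemma lower_bound {r : ℝ} (h0 : 0 ≤ r) (h1 : r < 1) :
    ∃ K > 0, ∀ n, K ≤ ∏ i ∈ Finset.range n, (1 - r ^ (i+1)) := by
  have hfac : ∀ i : ℕ, 0 < 1 - r ^ (i+1) := by
    intro i
    have := pow_lt_one₀ h0 h1 (show i+1 ≠ 0 by omega)
    simpa using sub_pos.mpr this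
  have hfac1 : ∀ i : ℕ, 1 - r ^ (i+1) ≤ 1 := by
    intro i; have := pow_nonneg h0 (i+1); linarith
  obtain ⟨N, hN⟩ : ∃ N, r ^ (N+1) ≤ (1-r)/2 := by
    have ht := tendsto_pow_atTop_nhds_zero_of_lt_one h0 h1
    have hev := ht.eventually_le_const (show (0:ℝ) < (1-r)/2 by linarith)
    obtain ⟨N, hN⟩ := hev.exists
    exact ⟨N, by
      calc r ^ (N+1) ≤ r ^ N := pow_le_pow_of_le_one h0 h1.le (Nat.le_succ N)
      _ ≤ (1-r)/2 := hN⟩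
  set P0 := ∏ i ∈ Finset.range N, (1 - r ^ (i+1)) with hP0
  have hP0pos : 0 < P0 := Finset.prod_pos (fun i _ => hfac i)
  refine ⟨P0 * (1/2), by positivity, fun n => ?_⟩
  rcases le_or_gt n N with hn | hn
  · obtain ⟨m, rfl⟩ := Nat.exists_eq_add_of_le hn
    rw [hP0, Finset.prod_range_add]
    have h2 : ∏ j ∈ Finset.range m, (1 - r ^ (n + j + 1)) ≤ 1 :=
      Finset.prod_le_one (fun i _ => (hfac _).le) (fun i _ => hfac1 _)
    have h3 : 0 < ∏ i ∈ Finset.range n, (1 - r ^ (i+1)) :=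
      Finset.prod_pos (fun i _ => hfac i)
    nlinarith
  · obtain ⟨m, rfl⟩ := Nat.exists_eq_add_of_le hn.le
    rw [Finset.prod_range_add]
    have hsum : ∑ j ∈ Finset.range m, r ^ (N + j + 1) ≤ 1/2 := by
      have h4 : ∀ j ∈ Finset.range m, r ^ (N + j + 1) = r ^ (N+1) * r ^ j := by
        intro j _; rw [← pow_add]; congr 1; omega
      rw [Finset.sum_congr rfl h4, ← Finset.mul_sum]
      have h5 : ∑ j ∈ Finset.range m, r ^ j ≤ (1-r)⁻¹ := by
        have := Summable.sum_le_tsum (Finset.range m) (fun i _ => pow_nonneg h0 i)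
          (summable_geometric_of_lt_one h0 h1)
        rwa [tsum_geometric_of_lt_one h0 h1] at this
      calc r ^ (N+1) * ∑ j ∈ Finset.range m, r ^ j ≤ ((1-r)/2) * (1-r)⁻¹ := by
            apply mul_le_mul hN h5 (Finset.sum_nonneg fun i _ => pow_nonneg h0 i) (by linarith)
        _ = 1/2 := by
            rw [div_mul_eq_mul_div, mul_inv_cancel₀ (by linarith : (1:ℝ)-r ≠ 0)]
    have hw := weier (fun j => r ^ (N + j + 1)) (fun j => pow_nonneg h0 _)
      (fun j => (pow_le_one₀ h0 h1.le)) m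
    have : (1:ℝ)/2 ≤ ∏ j ∈ Finset.range m, (1 - r ^ (N + j + 1)) := by
      refine le_trans ?_ hw; linarith
    nlinarith

lemma norm_qPoch_lower (q : ℂ) (hq : ‖q‖ < 1) :
    ∃ K > 0, ∀ n, K ≤ ‖qPoch q n‖ := by
  obtain ⟨K, hK, hKle⟩ := lower_bound (norm_nonneg q) hq
  refine ⟨K, hK, fun n => le_trans (hKle n) ?_⟩
  rw [qPoch, norm_prod]
  apply Finset.prod_le_prod
  · intro i _
    have := pow_lt_one₀ (norm_nonneg q) hq (show i+1 ≠ 0 by omega)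
    linarith
  · intro i _
    calc 1 - ‖q‖ ^ (i+1) = ‖(1:ℂ)‖ - ‖q ^ (i+1)‖ := by rw [norm_one, norm_pow]
      _ ≤ ‖1 - q ^ (i+1)‖ := norm_sub_norm_le 1 (q ^ (i+1))

lemma norm_qPoch_upper (q : ℂ) (hq : ‖q‖ < 1) (n : ℕ) :
    ‖qPoch q n‖ ≤ Real.exp ((1 - ‖q‖)⁻¹) := by
  rw [qPoch, norm_prod]
  calc ∏ i ∈ Finset.range n, ‖1 - q ^ (i+1)‖
      ≤ ∏ i ∈ Finset.range n, Real.exp (‖q‖ ^ (i+1)) := by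
        apply Finset.prod_le_prod (fun i _ => norm_nonneg _)
        intro i _
        calc ‖1 - q ^ (i+1)‖ ≤ ‖(1:ℂ)‖ + ‖q ^ (i+1)‖ := norm_sub_le _ _
          _ = ‖q‖ ^ (i+1) + 1 := by rw [norm_one, norm_pow]; ring
          _ ≤ Real.exp (‖q‖ ^ (i+1)) := Real.add_one_le_exp _
    _ = Real.exp (∑ i ∈ Finset.range n, ‖q‖ ^ (i+1)) := by rw [Real.exp_sum]
    _ ≤ Real.exp ((1 - ‖q‖)⁻¹) := by
        apply Real.exp_le_exp.mpr
        calc ∑ i ∈ Finset.range n, ‖q‖ ^ (i+1)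
            ≤ ∑ i ∈ Finset.range n, ‖q‖ ^ i := by
              apply Finset.sum_le_sum
              intro i _
              exact pow_le_pow_of_le_one (norm_nonneg q) hq.le (Nat.le_succ i)
          _ ≤ (1 - ‖q‖)⁻¹ := by
              have := Summable.sum_le_tsum (Finset.range n) (fun i _ => pow_nonneg (norm_nonneg q) i)
                (summable_geometric_of_lt_one (norm_nonneg q) hq)
              rwa [tsum_geometric_of_lt_one (norm_nonneg q) hq] at this

/-- The q-binomial coefficient as a ratio of Pochhammer symbols. -/
noncomputable def cB (q : ℂ) (n m : ℕ) : ℂ := qPoch q (n+m) / (qPoch q n * qPoch q m)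

lemma cB_zero_left (q : ℂ) (hq : ‖q‖ < 1) (m : ℕ) : cB q 0 m = 1 := by
  rw [cB, qPoch_zero]
  simp [div_self (by simpa using qPoch_ne q hq m)]

lemma cB_zero_right (q : ℂ) (hq : ‖q‖ < 1) (n : ℕ) : cB q n 0 = 1 := by
  rw [cB, qPoch_zero]
  simp [div_self (qPoch_ne q hq n)]

lemma cB_pascal (q : ℂ) (hq : ‖q‖ < 1) (n m : ℕ) :
    cB q (n+1) (m+1) = cB q n (m+1) + q ^ (n+1) * cB q (n+1) m := by
  have hA : qPoch q (n+1+(m+1)) = qPoch q (n+(m+1)) * (1 - q^(n+1) * q^(m+1)) := by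
    have : n+1+(m+1) = (n+(m+1))+1 := by omega
    rw [this, qPoch_succ, ← pow_add]
    congr 3
    omega
  have hB : qPoch q (n+1+m) = qPoch q (n+(m+1)) := by
    congr 1; omega
  have h1 := qPoch_succ q n
  have h2 := qPoch_succ q m
  have hn := qPoch_ne q hq n
  have hm := qPoch_ne q hq m
  have hn1 := one_sub_q_pow_ne q hq n
  have hm1 := one_sub_q_pow_ne q hq m
  rw [cB, cB, cB, hA, hB, h1, h2]
  field_simp
  ring

lemma cB_conv (q : ℂ) (hq : ‖q‖ < 1) (n m : ℕ) :
    cB q (n+1) m = ∑ k ∈ Finset.range (m+1), q ^ ((n+1)*k) * cB q n (m-k) := by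
  induction m with
  | zero => simp [cB_zero_right q hq]
  | succ m ih =>
    rw [cB_pascal q hq n m, ih]
    conv_rhs => rw [Finset.sum_range_succ']
    simp only [Nat.succ_sub_succ_eq_sub, Nat.sub_zero, Nat.mul_zero, pow_zero, one_mul]
    rw [add_comm, Finset.mul_sum]
    congr 1
    apply Finset.sum_congr rfl
    intro k _
    rw [← mul_assoc, ← pow_add]
    congr 2
    ring

lemma cB_norm_bound (q : ℂ) (hq : ‖q‖ < 1) :
    ∃ B ≥ 0, ∀ n m, ‖cB q n m‖ ≤ B := by
  obtain ⟨K, hK, hKle⟩ := norm_qPoch_lower q hq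
  refine ⟨Real.exp ((1 - ‖q‖)⁻¹) / (K * K), by positivity, fun n m => ?_⟩
  rw [cB, norm_div, norm_mul]
  apply div_le_div₀ (by positivity) (norm_qPoch_upper q hq (n+m)) (by positivity)
  exact mul_le_mul (hKle n) (hKle m) hK.le (le_trans hK.le (hKle n))

lemma summable_cB_norm (q : ℂ) (hq : ‖q‖ < 1) (x : ℂ) (hx : ‖x‖ < 1) (n : ℕ) :
    Summable (fun m => ‖cB q n m * x ^ m‖) := by
  obtain ⟨B, hB, hBle⟩ := cB_norm_bound q hq
  refine Summable.of_nonneg_of_le (fun m => norm_nonneg _) (fun m => ?_)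
    ((summable_geometric_of_lt_one (norm_nonneg x) hx).mul_left B)
  rw [norm_mul, norm_pow]
  exact mul_le_mul_of_nonneg_right (hBle n m) (by positivity)

lemma norm_x_mul_q_pow_lt (q : ℂ) (hq : ‖q‖ < 1) (x : ℂ) (hx : ‖x‖ < 1) (k : ℕ) :
    ‖x * q ^ (k+1)‖ < 1 := by
  rw [norm_mul, norm_pow]
  calc ‖x‖ * ‖q‖ ^ (k+1) ≤ ‖x‖ * 1 :=
        mul_le_mul_of_nonneg_left (pow_le_one₀ (norm_nonneg q) hq.le) (norm_nonneg x)
    _ < 1 := by rwa [mul_one]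

lemma tsum_cB (q : ℂ) (hq : ‖q‖ < 1) (x : ℂ) (hx : ‖x‖ < 1) (n : ℕ) :
    ∑' m : ℕ, cB q n m * x ^ m = (∏ i ∈ Finset.range (n+1), (1 - x * q ^ i))⁻¹ := by
  induction n with
  | zero =>
    have h1 : ∀ m : ℕ, cB q 0 m * x ^ m = x ^ m := by
      intro m; rw [cB_zero_left q hq, one_mul]
    rw [tsum_congr h1, tsum_geometric_of_norm_lt_one hx]
    simp
  | succ n ih =>
    have hgeo : Summable (fun k => ‖(x * q ^ (n+1)) ^ k‖) := by
      simp only [norm_pow]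
      exact summable_geometric_of_lt_one (norm_nonneg _) (norm_x_mul_q_pow_lt q hq x hx n)
    have hmain := tsum_mul_tsum_eq_tsum_sum_range_of_summable_norm hgeo
      (summable_cB_norm q hq x hx n)
    rw [tsum_geometric_of_norm_lt_one (norm_x_mul_q_pow_lt q hq x hx n), ih] at hmain
    have hpt : ∀ m : ℕ, (∑ k ∈ Finset.range (m+1),
        (x * q ^ (n+1)) ^ k * (cB q n (m-k) * x ^ (m-k))) = cB q (n+1) m * x ^ m := by
      intro m
      rw [cB_conv q hq n m, Finset.sum_mul]
      apply Finset.sum_congr rfl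
      intro k hk
      have hkm : k ≤ m := Nat.lt_succ_iff.mp (Finset.mem_range.mp hk)
      rw [mul_pow, ← pow_mul]
      have hx2 : x ^ k * x ^ (m-k) = x ^ m := by
        rw [← pow_add]; congr 1; omega
      calc x ^ k * q ^ ((n+1)*k) * (cB q n (m-k) * x ^ (m-k))
          = q ^ ((n+1)*k) * cB q n (m-k) * (x ^ k * x ^ (m-k)) := by ring
        _ = q ^ ((n+1)*k) * cB q n (m-k) * x ^ m := by rw [hx2]
    rw [tsum_congr hpt] at hmain
    rw [← hmain]
    conv_rhs => rw [Finset.prod_range_succ, mul_inv]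
    exact mul_comm ((1 - x * q ^ (n+1)):ℂ)⁻¹ (∏ i ∈ Finset.range (n+1), (1 - x * q ^ i))⁻¹

lemma exists_pow_le_half {r : ℝ} (h0 : 0 ≤ r) (h1 : r < 1) : ∃ N : ℕ, r ^ (N+1) ≤ 1/2 := by
  have ht := tendsto_pow_atTop_nhds_zero_of_lt_one h0 h1
  obtain ⟨N, hN⟩ := (ht.eventually_le_const (show (0:ℝ) < 1/2 by norm_num)).exists
  exact ⟨N, le_trans (pow_le_pow_of_le_one h0 h1.le (Nat.le_succ N)) hN⟩

lemma multipliable_qPoch (q : ℂ) (hq : ‖q‖ < 1) :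
    Multipliable (fun i : ℕ => 1 - q ^ (i+1)) := by
  obtain ⟨N, hN⟩ := exists_pow_le_half (norm_nonneg q) hq
  have hlog : Summable fun n : ℕ => Complex.log (1 - q ^ (n+1)) := by
    rw [← summable_nat_add_iff N]
    refine Summable.of_norm_bounded (g := fun i => (3/2) * (‖q‖^(N+1) * ‖q‖^i)) ?_ (fun i => ?_)
    · exact ((summable_geometric_of_lt_one (norm_nonneg q) hq).mul_left _).mul_left _
    · have hz : ‖-(q ^ (i + N + 1))‖ ≤ 1/2 := by
        rw [norm_neg, norm_pow]
        calc ‖q‖ ^ (i+N+1) ≤ ‖q‖ ^ (N+1) :=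
              pow_le_pow_of_le_one (norm_nonneg q) hq.le (by omega)
          _ ≤ 1/2 := hN
      have hb := Complex.norm_log_one_add_half_le_self hz
      rw [← sub_eq_add_neg] at hb
      calc ‖Complex.log (1 - q ^ (i + N + 1))‖ ≤ 3/2 * ‖-(q ^ (i+N+1))‖ := hb
        _ = 3/2 * (‖q‖^(N+1) * ‖q‖^i) := by
            rw [norm_neg, norm_pow, ← pow_add]
            congr 2
            omega
  exact Complex.multipliable_of_summable_log hlog

lemma tendsto_qPoch (q : ℂ) (hq : ‖q‖ < 1) :
    Filter.Tendsto (fun n => qPoch q n) Filter.atTop (𝓝 (qPochInf q)) := by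
  simpa [qPoch, qPochInf] using (multipliable_qPoch q hq).hasProd.tendsto_prod_nat

lemma norm_qPochInf_pos (q : ℂ) (hq : ‖q‖ < 1) : qPochInf q ≠ 0 := by
  obtain ⟨K, hK, hKle⟩ := norm_qPoch_lower q hq
  have h1 : K ≤ ‖qPochInf q‖ :=
    ge_of_tendsto' ((tendsto_qPoch q hq).norm) hKle
  intro h
  rw [h, norm_zero] at h1
  linarith

lemma euler_sum (q : ℂ) (hq : ‖q‖ < 1) (k : ℕ) :
    ∑' m : ℕ, (q ^ (k+1)) ^ m / qPoch q m = qPoch q k / qPochInf q := by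
  set x := q ^ (k+1) with hxdef
  have hx : ‖x‖ < 1 := by
    rw [hxdef, norm_pow]
    exact pow_lt_one₀ (norm_nonneg q) hq (by omega)
  obtain ⟨B, hB, hBle⟩ := cB_norm_bound q hq
  have hPne := norm_qPochInf_pos q hq
  -- Tannery: pointwise limits
  have hab : ∀ m : ℕ, Filter.Tendsto (fun n => cB q n m * x ^ m)
      Filter.atTop (𝓝 (x ^ m / qPoch q m)) := by
    intro m
    have h1 : Filter.Tendsto (fun n => qPoch q (n+m)) Filter.atTop (𝓝 (qPochInf q)) :=
      (tendsto_qPoch q hq).comp (Filter.tendsto_add_atTop_nat m)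
    have h2 : Filter.Tendsto (fun n => qPoch q n * qPoch q m) Filter.atTop
        (𝓝 (qPochInf q * qPoch q m)) := (tendsto_qPoch q hq).mul_const _
    have h3 := (h1.div h2 (mul_ne_zero hPne (qPoch_ne q hq m))).mul_const (x ^ m)
    have h4 : qPochInf q / (qPochInf q * qPoch q m) * x ^ m = x ^ m / qPoch q m := by
      rw [mul_comm (qPochInf q) (qPoch q m), ← div_div, div_right_comm, div_self hPne]
      ring
    rw [h4] at h3
    exact h3
  have htan := tendsto_tsum_of_dominated_convergence
    (f := fun n m => cB q n m * x ^ m) (g := fun m => x ^ m / qPoch q m)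
    (bound := fun m => B * ‖x‖ ^ m)
    ((summable_geometric_of_lt_one (norm_nonneg x) hx).mul_left B) hab
    (Filter.Eventually.of_forall (fun n m => by
      rw [norm_mul, norm_pow]
      exact mul_le_mul_of_nonneg_right (hBle n m) (by positivity)))
  -- identify the partial sums
  have hval : ∀ n : ℕ, (∑' m : ℕ, cB q n m * x ^ m) = qPoch q k / qPoch q (k+(n+1)) := by
    intro n
    rw [tsum_cB q hq x hx n, qPoch_add q k (n+1), div_mul_cancel_left₀ (qPoch_ne q hq k)]
  have hshift : Filter.Tendsto (fun n : ℕ => qPoch q (k+(n+1))) Filter.atTop (𝓝 (qPochInf q)) := by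
    have h5 : ∀ n : ℕ, qPoch q (k+(n+1)) = qPoch q (n + (k+1)) := by
      intro n; congr 1; omega
    simp only [h5]
    exact (tendsto_qPoch q hq).comp (Filter.tendsto_add_atTop_nat (k+1))
  have hlim2 : Filter.Tendsto (fun n : ℕ => qPoch q k / qPoch q (k+(n+1))) Filter.atTop
      (𝓝 (qPoch q k / qPochInf q)) := tendsto_const_nhds.div hshift hPne
  exact tendsto_nhds_unique (htan.congr hval) hlim2

noncomputable def Tq (q : ℂ) (p : ℕ × ℕ × ℕ) : ℂ :=
  q ^ (p.1 + p.2.1 + p.2.2 + p.1 * p.2.1 + p.2.1 * p.2.2 + p.2.2 * p.1)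
    / (qPoch q p.1 * qPoch q p.2.1 * qPoch q p.2.2)

lemma Tq_def (q : ℂ) (a b c : ℕ) : Tq q (a, b, c) =
    q ^ (a + b + c + a * b + b * c + c * a) / (qPoch q a * qPoch q b * qPoch q c) := rfl

def e3 : (ℕ × ℕ × ℕ) ≃ (Fin 3 → ℕ) :=
  { toFun := fun p => ![p.1, p.2.1, p.2.2]
    invFun := fun f => (f 0, f 1, f 2)
    left_inv := fun p => rfl
    right_inv := fun f => by
      funext i
      fin_cases i <;> rfl }

set_option maxHeartbeats 1000000 in
theorem stmt14 (q : ℂ) (hq : ‖q‖ < 1) :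
    ∑' n : Fin 3 → ℕ,
        q ^ (n 0 + n 1 + n 2 + n 0 * n 1 + n 1 * n 2 + n 2 * n 0)
          / (qPoch q (n 0) * qPoch q (n 1) * qPoch q (n 2))
      = 1 / qPochInf q *
          ∑' n : ℕ, q ^ n / ∏ i ∈ Finset.range (n + 1), (1 - q ^ (n + 1) * q ^ i) := by
  obtain ⟨K, hK, hKle⟩ := norm_qPoch_lower q hq
  have hLHS : (∑' n : Fin 3 → ℕ,
      q ^ (n 0 + n 1 + n 2 + n 0 * n 1 + n 1 * n 2 + n 2 * n 0)
        / (qPoch q (n 0) * qPoch q (n 1) * qPoch q (n 2))) = ∑' p : ℕ × ℕ × ℕ, Tq q p := by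
    rw [← e3.tsum_eq]
    exact tsum_congr (fun p => rfl)
  -- summability
  have hgeo : Summable (fun n : ℕ => ‖q‖ ^ n) :=
    summable_geometric_of_lt_one (norm_nonneg q) hq
  have h2 : Summable (fun p : ℕ × ℕ => ‖q‖ ^ p.1 * ‖q‖ ^ p.2) :=
    hgeo.mul_of_nonneg hgeo (fun n => by positivity) (fun n => by positivity)
  have h3 : Summable (fun p : ℕ × ℕ × ℕ => ‖q‖ ^ p.1 * (‖q‖ ^ p.2.1 * ‖q‖ ^ p.2.2)) :=
    hgeo.mul_of_nonneg h2 (fun n => by positivity) (fun p => by positivity)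
  have hTsum : Summable (Tq q) := by
    apply Summable.of_norm_bounded
      (g := fun p : ℕ × ℕ × ℕ => ‖q‖ ^ p.1 * (‖q‖ ^ p.2.1 * ‖q‖ ^ p.2.2) / (K * K * K))
      (h3.div_const (K * K * K))
    rintro ⟨a, b, c⟩
    rw [Tq_def, norm_div]
    have hnum : ‖q ^ (a + b + c + a * b + b * c + c * a)‖ ≤ ‖q‖ ^ a * (‖q‖ ^ b * ‖q‖ ^ c) := by
      rw [norm_pow, ← pow_add, ← pow_add]
      exact pow_le_pow_of_le_one (norm_nonneg q) hq.le (by omega)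
    have hden : K * K * K ≤ ‖qPoch q a * qPoch q b * qPoch q c‖ := by
      rw [norm_mul, norm_mul]
      exact mul_le_mul (mul_le_mul (hKle a) (hKle b) hK.le (le_trans hK.le (hKle a)))
        (hKle c) hK.le (mul_nonneg (le_trans hK.le (hKle a)) (norm_nonneg _))
    exact div_le_div₀ (by positivity) hnum (by positivity) hden
  rw [hLHS, Summable.tsum_prod' hTsum (fun a => hTsum.prod_factor a)]
  -- inner sum over c via Euler
  have hc : ∀ a b : ℕ, (∑' c : ℕ, Tq q (a, b, c))
      = q ^ (a + b + a * b) / (qPoch q a * qPoch q b) * (qPoch q (a + b) / qPochInf q) := by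
    intro a b
    have hptc : ∀ c : ℕ, Tq q (a, b, c)
        = q ^ (a + b + a * b) / (qPoch q a * qPoch q b)
          * ((q ^ ((a + b) + 1)) ^ c / qPoch q c) := by
      intro c
      rw [Tq_def, div_mul_div_comm, ← pow_mul, ← pow_add]
      congr 2
      ring
    rw [tsum_congr hptc, tsum_mul_left, euler_sum q hq (a + b)]
  have hfub : ∀ a : ℕ, (∑' p2 : ℕ × ℕ, Tq q (a, p2)) = ∑' b : ℕ, ∑' c : ℕ, Tq q (a, b, c) := by
    intro a
    exact Summable.tsum_prod' (hTsum.prod_factor a) (fun b => (hTsum.prod_factor a).prod_factor b)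
  -- sum over b via the q-binomial theorem
  have hb : ∀ a : ℕ, (∑' b : ℕ, q ^ (a + b + a * b) / (qPoch q a * qPoch q b)
        * (qPoch q (a + b) / qPochInf q))
      = (qPochInf q)⁻¹ * (q ^ a * (∏ i ∈ Finset.range (a + 1), (1 - q ^ (a + 1) * q ^ i))⁻¹) := by
    intro a
    have hx : ‖q ^ (a + 1)‖ < 1 := by
      rw [norm_pow]
      exact pow_lt_one₀ (norm_nonneg q) hq (by omega)
    have hptb : ∀ b : ℕ, q ^ (a + b + a * b) / (qPoch q a * qPoch q b)
        * (qPoch q (a + b) / qPochInf q)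
        = (qPochInf q)⁻¹ * (q ^ a * (cB q a b * (q ^ (a + 1)) ^ b)) := by
      intro b
      rw [cB]
      have hpow : q ^ (a + b + a * b) = q ^ a * (q ^ (a + 1)) ^ b := by
        rw [← pow_mul, ← pow_add]
        congr 1
        ring
      rw [hpow]
      ring
    rw [tsum_congr hptb, tsum_mul_left, tsum_mul_left, tsum_cB q hq _ hx a]
  calc (∑' a : ℕ, ∑' p2 : ℕ × ℕ, Tq q (a, p2))
      = ∑' a : ℕ, (qPochInf q)⁻¹ * (q ^ a
          * (∏ i ∈ Finset.range (a + 1), (1 - q ^ (a + 1) * q ^ i))⁻¹) := by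
        apply tsum_congr
        intro a
        rw [hfub a, tsum_congr (fun b => (hc a b)), hb a]
    _ = 1 / qPochInf q *
          ∑' n : ℕ, q ^ n / ∏ i ∈ Finset.range (n + 1), (1 - q ^ (n + 1) * q ^ i) := by
        rw [tsum_mul_left, one_div]
        congr 1
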